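/- arXiv:2301.10402 — 3 statements merged into one kernel-verified Lean document; each statement's English description precedes it below -/
import Mathlib

section
/- Fix 𝔠 > 0 and a continuous f : [0, 𝔠] → ℝ, and define 𝒢(α1, α2) = ∫₀^{𝔠} (2 α1 ∫₀^{ζ} f(ζ̃) dζ̃ + α2)^{-1/2} dζ on the set of (α1, α2) where the integrand's radicand is strictly positive on [0, 𝔠]. Then 𝒢 is C¹ there with ∂𝒢/∂α2 < 0, and consequently for each α1 there is at most one α2 with 𝒢(α1, α2) = 1, and the solution α2 = β̄(α1) of 𝒢(α1, α2) = 1 depends C¹ on α1 wherever it exists. -/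
open Set intervalIntegral
open MeasureTheory Metric

noncomputable def auxB (F : ℝ → ℝ) (ζ : ℝ) : (ℝ × ℝ) →L[ℝ] ℝ :=
  (2 * F ζ) • (ContinuousLinearMap.fst ℝ ℝ ℝ) + ContinuousLinearMap.snd ℝ ℝ ℝ

lemma auxB_apply (F : ℝ → ℝ) (ζ : ℝ) (q : ℝ × ℝ) :
    auxB F ζ q = 2 * F ζ * q.1 + q.2 := by
  simp [auxB, smul_eq_mul]

noncomputable def auxD (F : ℝ → ℝ) (p : ℝ × ℝ) (ζ : ℝ) : (ℝ × ℝ) →L[ℝ] ℝ :=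
  ((-(1:ℝ)/2) * (2 * p.1 * F ζ + p.2) ^ ((-(1:ℝ)/2) - 1 : ℝ)) • auxB F ζ

lemma auxD_def (F : ℝ → ℝ) (p : ℝ × ℝ) (ζ : ℝ) : auxD F p ζ =
    ((-(1:ℝ)/2) * (2 * p.1 * F ζ + p.2) ^ ((-(1:ℝ)/2) - 1 : ℝ)) • auxB F ζ := rfl

lemma auxB_norm_le (F : ℝ → ℝ) (ζ : ℝ) (M : ℝ) (hM : |F ζ| ≤ M) :
    ‖auxB F ζ‖ ≤ 2 * M + 1 := by
  have hM0 : 0 ≤ M := le_trans (abs_nonneg _) hM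
  refine ContinuousLinearMap.opNorm_le_bound _ (by linarith) fun q => ?_
  rw [auxB_apply]
  have h1 : ‖q.1‖ ≤ ‖q‖ := norm_fst_le q
  have h2 : ‖q.2‖ ≤ ‖q‖ := norm_snd_le q
  rw [Real.norm_eq_abs] at *
  have hq0 : (0:ℝ) ≤ ‖q‖ := norm_nonneg q
  calc |2 * F ζ * q.1 + q.2| ≤ |2 * F ζ * q.1| + |q.2| := abs_add_le _ _
    _ = 2 * |F ζ| * |q.1| + |q.2| := by rw [abs_mul, abs_mul]; norm_num
    _ ≤ 2 * M * ‖q‖ + ‖q‖ := by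
        have := abs_nonneg q.1
        gcongr
    _ = (2 * M + 1) * ‖q‖ := by ring

lemma aux_key (𝔠 : ℝ) (h𝔠 : 0 < 𝔠) (F : ℝ → ℝ) (hF : ContinuousOn F (Set.Icc 0 𝔠))
    (p₀ : ℝ × ℝ) (hp₀ : ∀ ζ ∈ Set.Icc (0:ℝ) 𝔠, 0 < 2 * p₀.1 * F ζ + p₀.2) :
    ∃ δ > (0:ℝ), ∃ ε > (0:ℝ), ∀ p ∈ Metric.ball p₀ ε, ∀ ζ ∈ Set.Icc (0:ℝ) 𝔠,
      δ ≤ 2 * p.1 * F ζ + p.2 := by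
  obtain ⟨C, hC⟩ := isCompact_Icc.exists_bound_of_continuousOn hF
  set M : ℝ := max C 0 with hMdef
  have hM0 : 0 ≤ M := le_max_right _ _
  have hMb : ∀ ζ ∈ Set.Icc (0:ℝ) 𝔠, |F ζ| ≤ M := fun ζ hζ =>
    le_trans (by simpa using hC ζ hζ) (le_max_left _ _)
  obtain ⟨ζ₀, hζ₀, hmin⟩ := isCompact_Icc.exists_isMinOn (f := fun ζ => 2 * p₀.1 * F ζ + p₀.2)
    (Set.nonempty_Icc.2 h𝔠.le) ((continuousOn_const.mul hF).add continuousOn_const)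
  set δ : ℝ := (2 * p₀.1 * F ζ₀ + p₀.2) / 2 with hδdef
  have hδ0 : 0 < δ := half_pos (hp₀ ζ₀ hζ₀)
  refine ⟨δ, hδ0, δ / (2 * M + 1), by positivity, fun p hp ζ hζ => ?_⟩
  have hd : dist p p₀ < δ / (2 * M + 1) := mem_ball.1 hp
  have h1 : |p.1 - p₀.1| ≤ dist p p₀ := by
    rw [Prod.dist_eq, Real.dist_eq]; exact le_max_left _ _
  have h2 : |p.2 - p₀.2| ≤ dist p p₀ := by
    rw [Prod.dist_eq, Real.dist_eq]; exact le_max_right _ _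
  have hmin' : 2 * δ ≤ 2 * p₀.1 * F ζ + p₀.2 := by
    have := isMinOn_iff.1 hmin ζ hζ
    simp only [hδdef]
    linarith [this]
  have hFb := hMb ζ hζ
  have key : |(p.1 - p₀.1) * F ζ| ≤ (δ / (2 * M + 1)) * M := by
    rw [abs_mul]
    exact mul_le_mul (le_trans h1 hd.le) hFb (abs_nonneg _) (by positivity)
  have e1 : -((δ / (2 * M + 1)) * M) ≤ (p.1 - p₀.1) * F ζ := neg_abs_le _ |>.trans' (by linarith [abs_le.1 key])
  have e2 : -(δ / (2 * M + 1)) ≤ p.2 - p₀.2 := by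
    have := abs_le.1 (le_trans h2 hd.le); linarith [this.1]
  have hq : (δ / (2 * M + 1)) * (2 * M + 1) = δ := by field_simp
  have expand : 2 * p.1 * F ζ + p.2 =
      (2 * p₀.1 * F ζ + p₀.2) + (2 * ((p.1 - p₀.1) * F ζ) + (p.2 - p₀.2)) := by ring
  rw [expand]
  nlinarith [e1, e2, hmin', hq]

lemma auxB_contOn (𝔠 : ℝ) (F : ℝ → ℝ) (hF : ContinuousOn F (Set.Icc 0 𝔠)) :
    ContinuousOn (auxB F) (Set.Icc 0 𝔠) := by
  unfold auxB
  exact ((continuousOn_const.mul hF).smul continuousOn_const).add continuousOn_const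

lemma aux_R_contOn (𝔠 : ℝ) (F : ℝ → ℝ) (hF : ContinuousOn F (Set.Icc 0 𝔠)) (p : ℝ × ℝ) :
    ContinuousOn (fun ζ => 2 * p.1 * F ζ + p.2) (Set.Icc 0 𝔠) :=
  (continuousOn_const.mul hF).add continuousOn_const

lemma aux_integrand_contOn (𝔠 : ℝ) (F : ℝ → ℝ) (hF : ContinuousOn F (Set.Icc 0 𝔠))
    (p : ℝ × ℝ) (hp : ∀ ζ ∈ Set.Icc (0:ℝ) 𝔠, 0 < 2 * p.1 * F ζ + p.2) (e : ℝ) :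
    ContinuousOn (fun ζ => (2 * p.1 * F ζ + p.2) ^ (e : ℝ)) (Set.Icc 0 𝔠) :=
  (aux_R_contOn 𝔠 F hF p).rpow_const fun ζ hζ => Or.inl (ne_of_gt (hp ζ hζ))

lemma auxD_contOn (𝔠 : ℝ) (F : ℝ → ℝ) (hF : ContinuousOn F (Set.Icc 0 𝔠))
    (p : ℝ × ℝ) (hp : ∀ ζ ∈ Set.Icc (0:ℝ) 𝔠, 0 < 2 * p.1 * F ζ + p.2) :
    ContinuousOn (fun ζ => auxD F p ζ) (Set.Icc 0 𝔠) := by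
  unfold auxD
  exact (continuousOn_const.mul (aux_integrand_contOn 𝔠 F hF p hp _)).smul (auxB_contOn 𝔠 F hF)

lemma auxD_intervalIntegrable (𝔠 : ℝ) (h𝔠 : 0 < 𝔠) (F : ℝ → ℝ)
    (hF : ContinuousOn F (Set.Icc 0 𝔠))
    (p : ℝ × ℝ) (hp : ∀ ζ ∈ Set.Icc (0:ℝ) 𝔠, 0 < 2 * p.1 * F ζ + p.2) :
    IntervalIntegrable (fun ζ => auxD F p ζ) volume 0 𝔠 := by
  apply ContinuousOn.intervalIntegrable
  rw [Set.uIcc_of_le h𝔠.le]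
  exact auxD_contOn 𝔠 F hF p hp

lemma aux_hasfderiv (𝔠 : ℝ) (h𝔠 : 0 < 𝔠) (F : ℝ → ℝ) (hF : ContinuousOn F (Set.Icc 0 𝔠))
    (p₀ : ℝ × ℝ) (hp₀ : ∀ ζ ∈ Set.Icc (0:ℝ) 𝔠, 0 < 2 * p₀.1 * F ζ + p₀.2) :
    HasFDerivAt (fun p : ℝ × ℝ => ∫ ζ in (0:ℝ)..𝔠, (2 * p.1 * F ζ + p.2) ^ (-(1:ℝ)/2))
      (∫ ζ in (0:ℝ)..𝔠, auxD F p₀ ζ) p₀ := by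
  obtain ⟨δ, hδ0, ε, hε0, hball⟩ := aux_key 𝔠 h𝔠 F hF p₀ hp₀
  obtain ⟨C, hC⟩ := isCompact_Icc.exists_bound_of_continuousOn hF
  set M : ℝ := max C 0 with hMdef
  have hM0 : 0 ≤ M := le_max_right _ _
  have hMb : ∀ ζ ∈ Set.Icc (0:ℝ) 𝔠, |F ζ| ≤ M := fun ζ hζ =>
    le_trans (by simpa using hC ζ hζ) (le_max_left _ _)
  have hpos : ∀ p ∈ Metric.ball p₀ ε, ∀ ζ ∈ Set.Icc (0:ℝ) 𝔠, 0 < 2 * p.1 * F ζ + p.2 :=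
    fun p hp ζ hζ => lt_of_lt_of_le hδ0 (hball p hp ζ hζ)
  have hmem : p₀ ∈ Metric.ball p₀ ε := mem_ball_self hε0
  have hIoc : Set.uIoc (0:ℝ) 𝔠 = Set.Ioc 0 𝔠 := Set.uIoc_of_le h𝔠.le
  -- bound for derivative norms on the ball
  have hDbound : ∀ ζ ∈ Set.Icc (0:ℝ) 𝔠, ∀ p ∈ Metric.ball p₀ ε,
      ‖auxD F p ζ‖ ≤ 1/2 * δ ^ ((-(1:ℝ)/2) - 1) * (2 * M + 1) := by
    intro ζ hζ p hp
    have hR : δ ≤ 2 * p.1 * F ζ + p.2 := hball p hp ζ hζ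
    have hRpos : 0 < 2 * p.1 * F ζ + p.2 := lt_of_lt_of_le hδ0 hR
    rw [auxD]
    refine le_trans (ContinuousLinearMap.opNorm_smul_le _ _) ?_
    have h1 : ‖(-(1:ℝ)/2) * (2 * p.1 * F ζ + p.2) ^ ((-(1:ℝ)/2) - 1 : ℝ)‖
        ≤ 1/2 * δ ^ ((-(1:ℝ)/2) - 1) := by
      rw [Real.norm_eq_abs, abs_mul]
      have h2 : (2 * p.1 * F ζ + p.2) ^ ((-(1:ℝ)/2) - 1 : ℝ) ≤ δ ^ ((-(1:ℝ)/2) - 1 : ℝ) :=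
        Real.rpow_le_rpow_of_nonpos hδ0 hR (by norm_num)
      have h3 : (0:ℝ) < (2 * p.1 * F ζ + p.2) ^ ((-(1:ℝ)/2) - 1 : ℝ) :=
        Real.rpow_pos_of_pos hRpos _
      rw [abs_of_pos h3]
      have : |(-(1:ℝ)/2)| = 1/2 := by norm_num
      rw [this]
      linarith
    have h4 : ‖auxB F ζ‖ ≤ 2 * M + 1 := auxB_norm_le F ζ M (hMb ζ hζ)
    calc ‖(-(1:ℝ)/2) * (2 * p.1 * F ζ + p.2) ^ ((-(1:ℝ)/2) - 1 : ℝ)‖ * ‖auxB F ζ‖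
        ≤ (1/2 * δ ^ ((-(1:ℝ)/2) - 1)) * (2 * M + 1) := by
          apply mul_le_mul h1 h4 (norm_nonneg _)
          positivity
      _ = _ := by ring
  -- differentiability of the integrand in p
  have hdiff : ∀ ζ ∈ Set.Icc (0:ℝ) 𝔠, ∀ p ∈ Metric.ball p₀ ε,
      HasFDerivAt (fun q : ℝ × ℝ => (2 * q.1 * F ζ + q.2) ^ (-(1:ℝ)/2)) (auxD F p ζ) p := by
    intro ζ hζ p hp
    have hRpos : 0 < 2 * p.1 * F ζ + p.2 := hpos p hp ζ hζ
    have hB : HasFDerivAt (fun q : ℝ × ℝ => 2 * q.1 * F ζ + q.2) (auxB F ζ) p := by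
      have h := (((hasFDerivAt_fst (𝕜 := ℝ) (p := p)).const_mul (2:ℝ)).mul_const (F ζ)).add
        (hasFDerivAt_snd (𝕜 := ℝ) (p := p))
      have hBeq : auxB F ζ = F ζ • (2:ℝ) • ContinuousLinearMap.fst ℝ ℝ ℝ +
          ContinuousLinearMap.snd ℝ ℝ ℝ := by
        refine ContinuousLinearMap.ext fun q => ?_
        rw [auxB_apply]
        simp [smul_eq_mul]
        ring
      rw [hBeq]
      exact h
    have houter : HasDerivAt (fun x : ℝ => x ^ (-(1:ℝ)/2))
        ((-(1:ℝ)/2) * (2 * p.1 * F ζ + p.2) ^ ((-(1:ℝ)/2) - 1 : ℝ)) (2 * p.1 * F ζ + p.2) :=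
      Real.hasDerivAt_rpow_const (Or.inl (ne_of_gt hRpos))
    exact houter.comp_hasFDerivAt p hB
  apply (intervalIntegral.hasFDerivAt_integral_of_dominated_of_fderiv_le
    (𝕜 := ℝ) (μ := volume) (F := fun (p : ℝ × ℝ) ζ => (2 * p.1 * F ζ + p.2) ^ (-(1:ℝ)/2))
    (F' := fun p ζ => auxD F p ζ)
    (bound := fun _ => 1/2 * δ ^ ((-(1:ℝ)/2) - 1) * (2 * M + 1)) (Metric.ball_mem_nhds p₀ hε0) ?_ ?_ ?_ ?_ ?_ ?_)
  · filter_upwards [Metric.ball_mem_nhds p₀ hε0] with p hp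
    rw [hIoc]
    exact ((aux_integrand_contOn 𝔠 F hF p (hpos p hp) _).mono
      Set.Ioc_subset_Icc_self).aestronglyMeasurable measurableSet_Ioc
  · apply ContinuousOn.intervalIntegrable
    rw [Set.uIcc_of_le h𝔠.le]
    exact aux_integrand_contOn 𝔠 F hF p₀ hp₀ _
  · rw [hIoc]
    exact ((auxD_contOn 𝔠 F hF p₀ hp₀).mono
      Set.Ioc_subset_Icc_self).aestronglyMeasurable measurableSet_Ioc
  · refine Filter.Eventually.of_forall fun ζ hζ p hp => ?_
    rw [hIoc] at hζ
    exact hDbound ζ (Set.Ioc_subset_Icc_self hζ) p hp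
  · exact intervalIntegrable_const
  · refine Filter.Eventually.of_forall fun ζ hζ p hp => ?_
    rw [hIoc] at hζ
    exact hdiff ζ (Set.Ioc_subset_Icc_self hζ) p hp

lemma aux_contderiv (𝔠 : ℝ) (h𝔠 : 0 < 𝔠) (F : ℝ → ℝ) (hF : ContinuousOn F (Set.Icc 0 𝔠))
    (p₀ : ℝ × ℝ) (hp₀ : ∀ ζ ∈ Set.Icc (0:ℝ) 𝔠, 0 < 2 * p₀.1 * F ζ + p₀.2) :
    ContinuousAt (fun p : ℝ × ℝ => ∫ ζ in (0:ℝ)..𝔠, auxD F p ζ) p₀ := by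
  obtain ⟨δ, hδ0, ε, hε0, hball⟩ := aux_key 𝔠 h𝔠 F hF p₀ hp₀
  obtain ⟨C, hC⟩ := isCompact_Icc.exists_bound_of_continuousOn hF
  set M : ℝ := max C 0 with hMdef
  have hM0 : 0 ≤ M := le_max_right _ _
  have hMb : ∀ ζ ∈ Set.Icc (0:ℝ) 𝔠, |F ζ| ≤ M := fun ζ hζ =>
    le_trans (by simpa using hC ζ hζ) (le_max_left _ _)
  have hpos : ∀ p ∈ Metric.ball p₀ ε, ∀ ζ ∈ Set.Icc (0:ℝ) 𝔠, 0 < 2 * p.1 * F ζ + p.2 :=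
    fun p hp ζ hζ => lt_of_lt_of_le hδ0 (hball p hp ζ hζ)
  have hDbound : ∀ ζ ∈ Set.Icc (0:ℝ) 𝔠, ∀ p ∈ Metric.ball p₀ ε,
      ‖auxD F p ζ‖ ≤ 1/2 * δ ^ ((-(1:ℝ)/2) - 1) * (2 * M + 1) := by
    intro ζ hζ p hp
    have hR : δ ≤ 2 * p.1 * F ζ + p.2 := hball p hp ζ hζ
    have hRpos : 0 < 2 * p.1 * F ζ + p.2 := lt_of_lt_of_le hδ0 hR
    rw [auxD]
    refine le_trans (ContinuousLinearMap.opNorm_smul_le _ _) ?_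
    have h1 : ‖(-(1:ℝ)/2) * (2 * p.1 * F ζ + p.2) ^ ((-(1:ℝ)/2) - 1 : ℝ)‖
        ≤ 1/2 * δ ^ ((-(1:ℝ)/2) - 1) := by
      rw [Real.norm_eq_abs, abs_mul]
      have h2 : (2 * p.1 * F ζ + p.2) ^ ((-(1:ℝ)/2) - 1 : ℝ) ≤ δ ^ ((-(1:ℝ)/2) - 1 : ℝ) :=
        Real.rpow_le_rpow_of_nonpos hδ0 hR (by norm_num)
      have h3 : (0:ℝ) < (2 * p.1 * F ζ + p.2) ^ ((-(1:ℝ)/2) - 1 : ℝ) :=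
        Real.rpow_pos_of_pos hRpos _
      rw [abs_of_pos h3]
      have h5 : |(-(1:ℝ)/2)| = 1/2 := by norm_num
      rw [h5]
      linarith
    have h4 : ‖auxB F ζ‖ ≤ 2 * M + 1 := auxB_norm_le F ζ M (hMb ζ hζ)
    calc ‖(-(1:ℝ)/2) * (2 * p.1 * F ζ + p.2) ^ ((-(1:ℝ)/2) - 1 : ℝ)‖ * ‖auxB F ζ‖
        ≤ (1/2 * δ ^ ((-(1:ℝ)/2) - 1)) * (2 * M + 1) := by
          apply mul_le_mul h1 h4 (norm_nonneg _)
          positivity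
      _ = _ := by ring
  have hrw : ∀ p : ℝ × ℝ, (∫ ζ in (0:ℝ)..𝔠, auxD F p ζ)
      = ∫ ζ in Set.Ioc (0:ℝ) 𝔠, auxD F p ζ := fun p =>
    intervalIntegral.integral_of_le h𝔠.le
  simp only [hrw]
  apply MeasureTheory.continuousAt_of_dominated
    (bound := fun _ => 1/2 * δ ^ ((-(1:ℝ)/2) - 1) * (2 * M + 1))
  · filter_upwards [Metric.ball_mem_nhds p₀ hε0] with p hp
    exact ((auxD_contOn 𝔠 F hF p (hpos p hp)).mono
      Set.Ioc_subset_Icc_self).aestronglyMeasurable measurableSet_Ioc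
  · filter_upwards [Metric.ball_mem_nhds p₀ hε0] with p hp
    refine (ae_restrict_iff' measurableSet_Ioc).2 (Filter.Eventually.of_forall fun ζ hζ => ?_)
    exact hDbound ζ (Set.Ioc_subset_Icc_self hζ) p hp
  · rw [MeasureTheory.integrable_const_iff]
    right
    simp [isFiniteMeasure_restrict, Real.volume_Ioc]
  · refine (ae_restrict_iff' measurableSet_Ioc).2 (Filter.Eventually.of_forall fun ζ hζ => ?_)
    have hζ' := Set.Ioc_subset_Icc_self hζ
    have hRpos : 0 < 2 * p₀.1 * F ζ + p₀.2 := hp₀ ζ hζ'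
    have hRc : ContinuousAt (fun p : ℝ × ℝ => 2 * p.1 * F ζ + p.2) p₀ := by fun_prop
    have hrpow : ContinuousAt (fun p : ℝ × ℝ => (2 * p.1 * F ζ + p.2) ^ ((-(1:ℝ)/2) - 1 : ℝ)) p₀ :=
      hRc.rpow_const (Or.inl (ne_of_gt hRpos))
    unfold auxD
    exact ((continuousAt_const.mul hrpow)).smul continuousAt_const


/-- Properties of the normalization function
`𝒢(α1,α2) = ∫₀^𝔠 (2 α1 ∫₀^ζ f + α2)^{-1/2} dζ` on the open region where the radicand
is strictly positive on `[0,𝔠]`: `𝒢` is `C¹` there, `∂𝒢/∂α2 < 0`, for each `α1` there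
is at most one `α2` with `𝒢 = 1`, and any solution branch `β̄` of `𝒢(α1, β̄(α1)) = 1`
defined on an open set is `C¹`. -/
theorem stmt_12 (𝔠 : ℝ) (h𝔠 : 0 < 𝔠)
    (f : ℝ → ℝ) (hf : ContinuousOn f (Set.Icc 0 𝔠))
    (S : Set (ℝ × ℝ))
    (hS : S = {p : ℝ × ℝ | ∀ ζ ∈ Set.Icc (0:ℝ) 𝔠,
      0 < 2 * p.1 * (∫ t in (0:ℝ)..ζ, f t) + p.2})
    (𝒢 : ℝ × ℝ → ℝ)
    (h𝒢 : ∀ p : ℝ × ℝ, 𝒢 p =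
      ∫ ζ in (0:ℝ)..𝔠, (2 * p.1 * (∫ t in (0:ℝ)..ζ, f t) + p.2) ^ (-(1:ℝ)/2)) :
    ContDiffOn ℝ 1 𝒢 S
    ∧ (∀ p ∈ S, deriv (fun a2 => 𝒢 (p.1, a2)) p.2 < 0)
    ∧ (∀ α1 a b : ℝ, (α1, a) ∈ S → (α1, b) ∈ S →
        𝒢 (α1, a) = 1 → 𝒢 (α1, b) = 1 → a = b)
    ∧ (∀ (U : Set ℝ) (βbar : ℝ → ℝ), IsOpen U →
        (∀ α1 ∈ U, (α1, βbar α1) ∈ S ∧ 𝒢 (α1, βbar α1) = 1) →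
        ContDiffOn ℝ 1 βbar U) := by
  set F : ℝ → ℝ := fun ζ => ∫ t in (0:ℝ)..ζ, f t with hFdef
  have hFcont : ContinuousOn F (Set.Icc 0 𝔠) := by
    have h := intervalIntegral.continuousOn_primitive_interval (μ := volume) (a := (0:ℝ)) (b := 𝔠)
      (f := f) (by rw [Set.uIcc_of_le h𝔠.le]; exact hf.integrableOn_Icc)
    rwa [Set.uIcc_of_le h𝔠.le] at h
  have hmemS : ∀ p : ℝ × ℝ, p ∈ S ↔ ∀ ζ ∈ Set.Icc (0:ℝ) 𝔠, 0 < 2 * p.1 * F ζ + p.2 := by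
    intro p; rw [hS]; exact Iff.rfl
  have h𝒢fun : 𝒢 = fun p : ℝ × ℝ => ∫ ζ in (0:ℝ)..𝔠, (2 * p.1 * F ζ + p.2) ^ (-(1:ℝ)/2) :=
    funext h𝒢
  -- S is open
  have hSopen : IsOpen S := by
    rw [Metric.isOpen_iff]
    intro p₀ hp₀
    obtain ⟨δ, hδ0, ε, hε0, hball⟩ := aux_key 𝔠 h𝔠 F hFcont p₀ ((hmemS p₀).1 hp₀)
    exact ⟨ε, hε0, fun p hp => (hmemS p).2 fun ζ hζ => lt_of_lt_of_le hδ0 (hball p hp ζ hζ)⟩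
  -- derivative of 𝒢 at points of S
  have hGderiv : ∀ p ∈ S, HasFDerivAt 𝒢 (∫ ζ in (0:ℝ)..𝔠, auxD F p ζ) p := by
    intro p hp
    rw [h𝒢fun]
    exact aux_hasfderiv 𝔠 h𝔠 F hFcont p ((hmemS p).1 hp)
  -- part 1 : C¹
  have part1 : ContDiffOn ℝ 1 𝒢 S := by
    rw [show (1 : WithTop ℕ∞) = 0 + 1 by rw [zero_add], contDiffOn_succ_iff_fderiv_of_isOpen hSopen]
    refine ⟨fun p hp => ((hGderiv p hp).differentiableAt).differentiableWithinAt, by simp, ?_⟩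
    rw [contDiffOn_zero]
    intro p hp
    have hc : ContinuousAt (fun q : ℝ × ℝ => ∫ ζ in (0:ℝ)..𝔠, auxD F q ζ) p :=
      aux_contderiv 𝔠 h𝔠 F hFcont p ((hmemS p).1 hp)
    have hev : ∀ᶠ q in nhds p, fderiv ℝ 𝒢 q = ∫ ζ in (0:ℝ)..𝔠, auxD F q ζ := by
      filter_upwards [hSopen.mem_nhds hp] with q hq
      exact (hGderiv q hq).fderiv
    exact ((hc.congr (hev.mono fun q hq => hq.symm)).continuousWithinAt)
  -- section derivative
  have hsec : ∀ p ∈ S, HasDerivAt (fun a2 => 𝒢 (p.1, a2))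
      ((∫ ζ in (0:ℝ)..𝔠, auxD F p ζ) ((0:ℝ),(1:ℝ))) p.2 := by
    intro p hp
    have hG : HasFDerivAt 𝒢 (∫ ζ in (0:ℝ)..𝔠, auxD F p ζ) (p.1, p.2) := by
      simpa using hGderiv p hp
    have hin : HasDerivAt (fun a2 : ℝ => ((p.1, a2) : ℝ × ℝ)) (((0:ℝ),(1:ℝ))) p.2 :=
      (hasDerivAt_const p.2 p.1).prodMk (hasDerivAt_id p.2)
    exact hG.comp_hasDerivAt p.2 hin
  -- the section derivative value is negative
  have hA2neg : ∀ p ∈ S, (∫ ζ in (0:ℝ)..𝔠, auxD F p ζ) ((0:ℝ),(1:ℝ)) < 0 := by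
    intro p hp
    have hp' := (hmemS p).1 hp
    have happ : (∫ ζ in (0:ℝ)..𝔠, auxD F p ζ) ((0:ℝ),(1:ℝ))
        = ∫ ζ in (0:ℝ)..𝔠, (auxD F p ζ) ((0:ℝ),(1:ℝ)) :=
      ContinuousLinearMap.intervalIntegral_apply
        (auxD_intervalIntegrable 𝔠 h𝔠 F hFcont p hp') _
    rw [happ]
    have heval : ∀ ζ, (auxD F p ζ) ((0:ℝ),(1:ℝ))
        = (-(1:ℝ)/2) * (2 * p.1 * F ζ + p.2) ^ ((-(1:ℝ)/2) - 1 : ℝ) := by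
      intro ζ
      rw [auxD_def]
      simp [auxB_apply]
    simp only [heval]
    have hlt : (∫ ζ in (0:ℝ)..𝔠, (-(1:ℝ)/2) * (2 * p.1 * F ζ + p.2) ^ ((-(1:ℝ)/2) - 1 : ℝ))
        < ∫ ζ in (0:ℝ)..𝔠, (0:ℝ) := by
      apply intervalIntegral.integral_lt_integral_of_continuousOn_of_le_of_exists_lt h𝔠
      · exact continuousOn_const.mul (aux_integrand_contOn 𝔠 F hFcont p hp' _)
      · exact continuousOn_const
      · intro ζ hζ
        have := Real.rpow_pos_of_pos (hp' ζ (Set.Ioc_subset_Icc_self hζ)) ((-(1:ℝ)/2) - 1 : ℝ)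
        nlinarith
      · refine ⟨0, Set.left_mem_Icc.2 h𝔠.le, ?_⟩
        have := Real.rpow_pos_of_pos (hp' 0 (Set.left_mem_Icc.2 h𝔠.le)) ((-(1:ℝ)/2) - 1 : ℝ)
        nlinarith
    simpa using hlt
  have part2 : ∀ p ∈ S, deriv (fun a2 => 𝒢 (p.1, a2)) p.2 < 0 := by
    intro p hp
    rw [(hsec p hp).deriv]
    exact hA2neg p hp
  -- upward closedness and strict monotonicity
  have hup : ∀ (x a b : ℝ), (x, a) ∈ S → a ≤ b → (x, b) ∈ S := by
    intro x a b hab hle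
    rw [hmemS] at hab ⊢
    intro ζ hζ
    have := hab ζ hζ
    simp only at this ⊢
    linarith
  have hmono : ∀ (x a b : ℝ), (x, a) ∈ S → a < b → 𝒢 (x, b) < 𝒢 (x, a) := by
    intro x a b hab hlt
    have hbb : (x, b) ∈ S := hup x a b hab hlt.le
    have ha' := (hmemS (x, a)).1 hab
    have hb' := (hmemS (x, b)).1 hbb
    rw [h𝒢 (x, a), h𝒢 (x, b)]
    apply intervalIntegral.integral_lt_integral_of_continuousOn_of_le_of_exists_lt h𝔠
    · exact aux_integrand_contOn 𝔠 F hFcont (x, b) hb' _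
    · exact aux_integrand_contOn 𝔠 F hFcont (x, a) ha' _
    · intro ζ hζ
      have hζ' := Set.Ioc_subset_Icc_self hζ
      exact (Real.rpow_lt_rpow_of_neg (ha' ζ hζ') (by simp only; linarith [ha' ζ hζ'])
        (by norm_num)).le
    · refine ⟨0, Set.left_mem_Icc.2 h𝔠.le, ?_⟩
      have h0 := ha' 0 (Set.left_mem_Icc.2 h𝔠.le)
      exact Real.rpow_lt_rpow_of_neg h0 (by simp only at h0 ⊢; linarith) (by norm_num)
  have hmono' : ∀ (x a b : ℝ), (x, a) ∈ S → a ≤ b → 𝒢 (x, b) ≤ 𝒢 (x, a) := by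
    intro x a b hab hle
    rcases eq_or_lt_of_le hle with rfl | hlt
    · exact le_refl _
    · exact (hmono x a b hab hlt).le
  have part3 : ∀ α1 a b : ℝ, (α1, a) ∈ S → (α1, b) ∈ S →
      𝒢 (α1, a) = 1 → 𝒢 (α1, b) = 1 → a = b := by
    intro α1 a b ha hb hga hgb
    rcases lt_trichotomy a b with h | h | h
    · have := hmono α1 a b ha h; rw [hga, hgb] at this; linarith
    · exact h
    · have := hmono α1 b a hb h; rw [hga, hgb] at this; linarith
  refine ⟨part1, part2, part3, ?_⟩
  intro U βbar hUopen hU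
  intro x₀ hx₀
  suffices h : ContDiffAt ℝ 1 βbar x₀ from h.contDiffWithinAt
  -- continuity of βbar at every point of U
  have hβcont : ∀ x ∈ U, ContinuousAt βbar x := by
    intro x₁ hx₁
    have hp₁ : (x₁, βbar x₁) ∈ S := (hU x₁ hx₁).1
    have hG1 : 𝒢 (x₁, βbar x₁) = 1 := (hU x₁ hx₁).2
    set y₀ := βbar x₁ with hy₀
    rw [ContinuousAt, Metric.tendsto_nhds]
    intro ε hε
    obtain ⟨r, hr0, hrball⟩ := Metric.isOpen_iff.1 hSopen (x₁, y₀) hp₁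
    set ε' : ℝ := min (ε/2) (r/2) with hε'def
    have hε'0 : 0 < ε' := lt_min (by linarith) (by linarith)
    have hε'r : ε' ≤ r/2 := min_le_right _ _
    have hε'ε : ε' ≤ ε/2 := min_le_left _ _
    have hmemlo : (x₁, y₀ - ε') ∈ S := by
      apply hrball
      rw [mem_ball, Prod.dist_eq]
      simp only [dist_self, Real.dist_eq]
      have : |y₀ - ε' - y₀| = ε' := by rw [show y₀ - ε' - y₀ = -ε' by ring, abs_neg,
        abs_of_pos hε'0]
      rw [this, max_eq_right hε'0.le]
      linarith
    have hmemhi : (x₁, y₀ + ε') ∈ S := hup x₁ y₀ (y₀ + ε') hp₁ (by linarith)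
    have hvallo : 1 < 𝒢 (x₁, y₀ - ε') := by
      have := hmono x₁ (y₀ - ε') y₀ hmemlo (by linarith)
      rw [hG1] at this
      linarith
    have hvalhi : 𝒢 (x₁, y₀ + ε') < 1 := by
      have := hmono x₁ y₀ (y₀ + ε') hp₁ (by linarith)
      rw [hG1] at this
      linarith
    have hGcont : ContinuousOn 𝒢 S := part1.continuousOn
    have hclo : ContinuousAt (fun x => 𝒢 (x, y₀ - ε')) x₁ :=
      ContinuousAt.comp (x := x₁) (g := 𝒢) (f := fun x => ((x, y₀ - ε') : ℝ × ℝ))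
        (hGcont.continuousAt (hSopen.mem_nhds hmemlo))
        ((continuous_id.prodMk continuous_const).continuousAt)
    have hchi : ContinuousAt (fun x => 𝒢 (x, y₀ + ε')) x₁ :=
      ContinuousAt.comp (x := x₁) (g := 𝒢) (f := fun x => ((x, y₀ + ε') : ℝ × ℝ))
        (hGcont.continuousAt (hSopen.mem_nhds hmemhi))
        ((continuous_id.prodMk continuous_const).continuousAt)
    have hev1 : ∀ᶠ x in nhds x₁, 1 < 𝒢 (x, y₀ - ε') :=
      hclo.eventually (eventually_gt_nhds hvallo)
    have hev2 : ∀ᶠ x in nhds x₁, 𝒢 (x, y₀ + ε') < 1 :=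
      hchi.eventually (eventually_lt_nhds hvalhi)
    have hev3 : ∀ᶠ x in nhds x₁, (x, y₀ - ε') ∈ S :=
      ((continuous_id.prodMk continuous_const).continuousAt).eventually_mem
        (hSopen.mem_nhds hmemlo)
    have hev4 : ∀ᶠ x in nhds x₁, (x, y₀ + ε') ∈ S :=
      ((continuous_id.prodMk continuous_const).continuousAt).eventually_mem
        (hSopen.mem_nhds hmemhi)
    have hev5 : ∀ᶠ x in nhds x₁, x ∈ U := hUopen.mem_nhds hx₁
    filter_upwards [hev1, hev2, hev3, hev4, hev5] with x h1 h2 h3 h4 h5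
    have hpx : (x, βbar x) ∈ S := (hU x h5).1
    have hGx : 𝒢 (x, βbar x) = 1 := (hU x h5).2
    have hlow : y₀ - ε' < βbar x := by
      by_contra hcon
      push_neg at hcon
      have := hmono' x (βbar x) (y₀ - ε') hpx hcon
      rw [hGx] at this
      linarith
    have hhigh : βbar x < y₀ + ε' := by
      by_contra hcon
      push_neg at hcon
      have := hmono' x (y₀ + ε') (βbar x) h4 hcon
      rw [hGx] at this
      linarith
    rw [Real.dist_eq, abs_lt]
    constructor <;> linarith
  -- implicit function theorem via the local inverse of Φ = (id, 𝒢)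
  have hx₀S : (x₀, βbar x₀) ∈ S := (hU x₀ hx₀).1
  set p₀ : ℝ × ℝ := (x₀, βbar x₀) with hp₀def
  set A : (ℝ × ℝ) →L[ℝ] ℝ := ∫ ζ in (0:ℝ)..𝔠, auxD F p₀ ζ with hAdef
  have hGA : HasFDerivAt 𝒢 A p₀ := hGderiv p₀ hx₀S
  have hA2 : A ((0:ℝ),(1:ℝ)) < 0 := hA2neg p₀ hx₀S
  have hA2ne : A ((0:ℝ),(1:ℝ)) ≠ 0 := ne_of_lt hA2
  have hAdec : ∀ u v : ℝ, A (u, v) = A (u, 0) + v * A (0, 1) := by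
    intro u v
    have h1 : ((u, v) : ℝ × ℝ) = (u, 0) + v • (((0:ℝ), (1:ℝ)) : ℝ × ℝ) := by
      simp [Prod.ext_iff]
    rw [h1, map_add, A.map_smul, smul_eq_mul]
  let e : (ℝ × ℝ) ≃ₗ[ℝ] (ℝ × ℝ) :=
    { toFun := fun q => (q.1, A q)
      map_add' := fun q r => by simp [Prod.ext_iff]
      map_smul' := fun c q => by simp [Prod.ext_iff]
      invFun := fun q => (q.1, (q.2 - A (q.1, 0)) / A ((0:ℝ),(1:ℝ)))
      left_inv := fun q => by
        have h1 : A q = A (q.1, 0) + q.2 * A (0, 1) := by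
          rw [← hAdec q.1 q.2]
        refine Prod.ext rfl ?_
        simp only [h1]
        field_simp
        ring
      right_inv := fun q => by
        refine Prod.ext rfl ?_
        simp only [hAdec q.1 ((q.2 - A (q.1, 0)) / A ((0:ℝ),(1:ℝ)))]
        field_simp
        ring }
  set Φ : ℝ × ℝ → ℝ × ℝ := fun q => (q.1, 𝒢 q) with hΦdef
  have hΦcd : ContDiffAt ℝ 1 Φ p₀ :=
    (contDiffAt_fst).prodMk (part1.contDiffAt (hSopen.mem_nhds hx₀S))
  let e' : (ℝ × ℝ) ≃L[ℝ] (ℝ × ℝ) := e.toContinuousLinearEquiv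
  have hΦderiv : HasFDerivAt Φ (e' : (ℝ × ℝ) →L[ℝ] (ℝ × ℝ)) p₀ := by
    have h1 : HasFDerivAt Φ ((ContinuousLinearMap.fst ℝ ℝ ℝ).prod A) p₀ :=
      (hasFDerivAt_fst).prodMk hGA
    have h2 : (e' : (ℝ × ℝ) →L[ℝ] (ℝ × ℝ)) = (ContinuousLinearMap.fst ℝ ℝ ℝ).prod A :=
      ContinuousLinearMap.ext fun q => rfl
    rw [h2]
    exact h1
  have hgc : ContDiffAt ℝ 1 (hΦcd.localInverse hΦderiv one_ne_zero) (Φ p₀) :=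
    hΦcd.to_localInverse hΦderiv one_ne_zero
  set g : ℝ × ℝ → ℝ × ℝ := hΦcd.localInverse hΦderiv one_ne_zero with hgdef
  have hleft : ∀ᶠ q in nhds p₀, g (Φ q) = q :=
    (hΦcd.hasStrictFDerivAt' hΦderiv one_ne_zero).eventually_left_inverse
  have hqc : ContinuousAt (fun x : ℝ => ((x, βbar x) : ℝ × ℝ)) x₀ :=
    continuousAt_id.prodMk (hβcont x₀ hx₀)
  have hev2 : ∀ᶠ x in nhds x₀, g (Φ (x, βbar x)) = (x, βbar x) := hqc.eventually hleft
  have hevU : ∀ᶠ x in nhds x₀, x ∈ U := hUopen.mem_nhds hx₀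
  have heq : ∀ᶠ x in nhds x₀, βbar x = (g (x, (1:ℝ))).2 := by
    filter_upwards [hev2, hevU] with x h1 h2
    have hΦx : Φ (x, βbar x) = (x, (1:ℝ)) := by
      simp only [hΦdef]
      rw [(hU x h2).2]
    rw [hΦx] at h1
    exact (congrArg Prod.snd h1).symm
  have hΦp₀ : Φ p₀ = ((x₀, (1:ℝ)) : ℝ × ℝ) := by
    simp only [hΦdef]
    rw [(hU x₀ hx₀).2]
  have hcomp : ContDiffAt ℝ 1 (fun x : ℝ => (g ((x, (1:ℝ)) : ℝ × ℝ)).2) x₀ := by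
    have hinner : ContDiffAt ℝ 1 (fun x : ℝ => ((x, (1:ℝ)) : ℝ × ℝ)) x₀ :=
      contDiffAt_id.prodMk contDiffAt_const
    have hg' : ContDiffAt ℝ 1 g ((x₀, (1:ℝ)) : ℝ × ℝ) := by rwa [hΦp₀] at hgc
    exact contDiffAt_snd.comp x₀ (hg'.comp x₀ hinner)
  exact hcomp.congr_of_eventuallyEq heq
end

section
/- Let Ω ⊂ ℝ² be open, f : ℝ → ℝ be C¹ with primitive F, and let φ ∈ C²(Ω) satisfy ∂x2x2 φ = f(φ) in Ω. Define v1 = ∂x2 φ, v2 = -∂x1 φ, and p = -(∂x2 φ)²/2 + F(φ). Then (v1, v2, p) is a classical solution of the steady hydrostatic Euler equations: v1 ∂x1 v1 + v2 ∂x2 v1 = -∂x1 p, ∂x2 p = 0, and ∂x1 v1 + ∂x2 v2 = 0 in Ω. -/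
open Set

/-- Reconstruction of a hydrostatic Euler flow from a stream function: if `φ ∈ C²(Ω)`
satisfies `∂x2x2 φ = f(φ)` in the open set `Ω`, `F` is a primitive of the `C¹` function
`f`, and `v1 = ∂x2 φ`, `v2 = -∂x1 φ`, `p = -(∂x2 φ)²/2 + F(φ)`, then `(v1, v2, p)` is a
classical solution of the steady hydrostatic Euler equations in `Ω`. -/
theorem stmt_15 (Ω : Set (ℝ × ℝ)) (hΩ : IsOpen Ω)
    (f F : ℝ → ℝ) (hf : ContDiff ℝ 1 f)
    (hF : ∀ t : ℝ, HasDerivAt F (f t) t)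
    (φ : ℝ × ℝ → ℝ) (hφ : ContDiffOn ℝ 2 φ Ω)
    (heq : ∀ x ∈ Ω, deriv (deriv (fun t => φ (x.1, t))) x.2 = f (φ x))
    (v1 v2 p : ℝ × ℝ → ℝ)
    (hv1 : ∀ x : ℝ × ℝ, v1 x = deriv (fun t => φ (x.1, t)) x.2)
    (hv2 : ∀ x : ℝ × ℝ, v2 x = - deriv (fun t => φ (t, x.2)) x.1)
    (hp : ∀ x : ℝ × ℝ, p x = - (v1 x) ^ 2 / 2 + F (φ x)) :
    ∀ x ∈ Ω,
      v1 x * deriv (fun t => v1 (t, x.2)) x.1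
        + v2 x * deriv (fun t => v1 (x.1, t)) x.2
        = - deriv (fun t => p (t, x.2)) x.1
      ∧ deriv (fun t => p (x.1, t)) x.2 = 0
      ∧ deriv (fun t => v1 (t, x.2)) x.1 + deriv (fun t => v2 (x.1, t)) x.2 = 0 := by
  intro x hx
  set D1 : ℝ × ℝ → ℝ := fun z => fderiv ℝ φ z ((1 : ℝ), (0 : ℝ)) with hD1
  set D2 : ℝ × ℝ → ℝ := fun z => fderiv ℝ φ z ((0 : ℝ), (1 : ℝ)) with hD2
  have hCA : ∀ y ∈ Ω, ContDiffAt ℝ 2 φ y := fun y hy => hφ.contDiffAt (hΩ.mem_nhds hy)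
  have hφd : ∀ y ∈ Ω, DifferentiableAt ℝ φ y := fun y hy =>
    (hCA y hy).differentiableAt two_ne_zero
  -- horizontal and vertical partial derivatives as HasDerivAt
  have lineH : ∀ y : ℝ × ℝ, HasDerivAt (fun t => (t, y.2)) ((1 : ℝ), (0 : ℝ)) y.1 :=
    fun y => (hasDerivAt_id y.1).prodMk (hasDerivAt_const y.1 y.2)
  have lineV : ∀ y : ℝ × ℝ, HasDerivAt (fun t => (y.1, t)) ((0 : ℝ), (1 : ℝ)) y.2 :=
    fun y => (hasDerivAt_const y.2 y.1).prodMk (hasDerivAt_id y.2)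
  have pd1 : ∀ y ∈ Ω, HasDerivAt (fun t => φ (t, y.2)) (D1 y) y.1 := by
    intro y hy
    have := ((hφd y hy).hasFDerivAt).comp_hasDerivAt y.1 (lineH y)
    simpa [Function.comp_def] using this
  have pd2 : ∀ y ∈ Ω, HasDerivAt (fun t => φ (y.1, t)) (D2 y) y.2 := by
    intro y hy
    have := ((hφd y hy).hasFDerivAt).comp_hasDerivAt y.2 (lineV y)
    simpa [Function.comp_def] using this
  -- v1 = D2 and v2 = -D1 on Ω
  have hv1D : ∀ y ∈ Ω, v1 y = D2 y := by
    intro y hy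
    rw [hv1 y, (pd2 y hy).deriv]
  have hv2D : ∀ y ∈ Ω, v2 y = -D1 y := by
    intro y hy
    rw [hv2 y, (pd1 y hy).deriv]
  -- second derivative
  have hf' : ContDiffAt ℝ 1 (fderiv ℝ φ) x := (hCA x hx).fderiv_right le_rfl
  set B := fderiv ℝ (fderiv ℝ φ) x with hB
  have hBd : HasFDerivAt (fderiv ℝ φ) B x := (hf'.differentiableAt one_ne_zero).hasFDerivAt
  -- derivatives of D1, D2 along lines
  have hD2H : HasDerivAt (fun t => D2 (t, x.2)) (B (1, 0) (0, 1)) x.1 := by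
    have h1 : HasDerivAt (fun t => fderiv ℝ φ (t, x.2)) (B (1, 0)) x.1 := by
      have := hBd.comp_hasDerivAt x.1 (lineH x)
      simpa [Prod.mk.eta, Function.comp_def] using this
    have := h1.clm_apply (hasDerivAt_const x.1 ((0 : ℝ), (1 : ℝ)))
    simpa [Prod.mk.eta] using this
  have hD2V : HasDerivAt (fun t => D2 (x.1, t)) (B (0, 1) (0, 1)) x.2 := by
    have h1 : HasDerivAt (fun t => fderiv ℝ φ (x.1, t)) (B (0, 1)) x.2 := by
      have := hBd.comp_hasDerivAt x.2 (lineV x)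
      simpa [Prod.mk.eta, Function.comp_def] using this
    have := h1.clm_apply (hasDerivAt_const x.2 ((0 : ℝ), (1 : ℝ)))
    simpa [Prod.mk.eta] using this
  have hD1V : HasDerivAt (fun t => D1 (x.1, t)) (B (0, 1) (1, 0)) x.2 := by
    have h1 : HasDerivAt (fun t => fderiv ℝ φ (x.1, t)) (B (0, 1)) x.2 := by
      have := hBd.comp_hasDerivAt x.2 (lineV x)
      simpa [Prod.mk.eta, Function.comp_def] using this
    have := h1.clm_apply (hasDerivAt_const x.2 ((1 : ℝ), (0 : ℝ)))
    simpa [Prod.mk.eta] using this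
  -- eventual membership of the lines in Ω
  have memH : ∀ᶠ t in nhds x.1, (t, x.2) ∈ Ω := by
    have hc : Continuous fun t : ℝ => (t, x.2) := continuous_id.prodMk continuous_const
    have : (fun t : ℝ => (t, x.2)) ⁻¹' Ω ∈ nhds x.1 :=
      hc.continuousAt.preimage_mem_nhds (by rw [Prod.mk.eta]; exact hΩ.mem_nhds hx)
    exact this
  have memV : ∀ᶠ t in nhds x.2, (x.1, t) ∈ Ω := by
    have hc : Continuous fun t : ℝ => (x.1, t) := continuous_const.prodMk continuous_id
    have : (fun t : ℝ => (x.1, t)) ⁻¹' Ω ∈ nhds x.2 :=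
      hc.continuousAt.preimage_mem_nhds (by rw [Prod.mk.eta]; exact hΩ.mem_nhds hx)
    exact this
  -- deriv of v1 along horizontal line
  have hv1H : HasDerivAt (fun t => v1 (t, x.2)) (B (1, 0) (0, 1)) x.1 := by
    apply hD2H.congr_of_eventuallyEq
    filter_upwards [memH] with t ht
    exact hv1D (t, x.2) ht
  -- the vertical second derivative: B (0,1) (0,1) = f (φ x)
  have hderiv2 : HasDerivAt (deriv fun t => φ (x.1, t)) (B (0, 1) (0, 1)) x.2 := by
    apply hD2V.congr_of_eventuallyEq
    filter_upwards [memV] with t ht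
    exact (pd2 (x.1, t) ht).deriv
  have hB22 : B (0, 1) (0, 1) = f (φ x) := by
    rw [← hderiv2.deriv]; exact heq x hx
  -- ∂2 v1 = f (φ x)
  have hv1V : deriv (fun t => v1 (x.1, t)) x.2 = f (φ x) := by
    have : (fun t => v1 (x.1, t)) = deriv fun t => φ (x.1, t) := by
      funext t; exact hv1 (x.1, t)
    rw [this]; exact heq x hx
  -- ∂2 v2
  have hv2V : HasDerivAt (fun t => v2 (x.1, t)) (-(B (0, 1) (1, 0))) x.2 := by
    apply (hD1V.neg).congr_of_eventuallyEq
    filter_upwards [memV] with t ht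
    exact hv2D (x.1, t) ht
  -- pressure derivatives
  have hFH : HasDerivAt (fun t => F (φ (t, x.2))) (f (φ x) * D1 x) x.1 := by
    have := (hF (φ x)).comp x.1 (by simpa [Prod.mk.eta] using pd1 x hx)
    simpa [Function.comp_def] using this
  have hFV : HasDerivAt (fun t => F (φ (x.1, t))) (f (φ x) * D2 x) x.2 := by
    have := (hF (φ x)).comp x.2 (by simpa [Prod.mk.eta] using pd2 x hx)
    simpa [Function.comp_def] using this
  have hpH : HasDerivAt (fun t => p (t, x.2))
      (-(2 * v1 x ^ 1 * (B (1, 0) (0, 1))) / 2 + f (φ x) * D1 x) x.1 := by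
    have hx1 : v1 (x.1, x.2) = v1 x := by rw [Prod.mk.eta]
    have h1 : HasDerivAt (fun t => -(v1 (t, x.2)) ^ 2 / 2 + F (φ (t, x.2)))
        (-(2 * v1 (x.1, x.2) ^ 1 * (B (1, 0) (0, 1))) / 2 + f (φ x) * D1 x) x.1 :=
      (((hv1H.pow 2).neg.div_const 2).add hFH)
    rw [hx1] at h1
    apply h1.congr_of_eventuallyEq
    filter_upwards with t
    exact hp (t, x.2)
  have hpV : HasDerivAt (fun t => p (x.1, t))
      (-(2 * v1 x ^ 1 * f (φ x)) / 2 + f (φ x) * D2 x) x.2 := by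
    have hv1V' : HasDerivAt (fun t => v1 (x.1, t)) (f (φ x)) x.2 := by
      have : (fun t => v1 (x.1, t)) = deriv fun t => φ (x.1, t) := by
        funext t; exact hv1 (x.1, t)
      rw [this, ← hB22]; exact hderiv2
    have hx1 : v1 (x.1, x.2) = v1 x := by rw [Prod.mk.eta]
    have h1 : HasDerivAt (fun t => -(v1 (x.1, t)) ^ 2 / 2 + F (φ (x.1, t)))
        (-(2 * v1 (x.1, x.2) ^ 1 * f (φ x)) / 2 + f (φ x) * D2 x) x.2 :=
      (((hv1V'.pow 2).neg.div_const 2).add hFV)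
    rw [hx1] at h1
    apply h1.congr_of_eventuallyEq
    filter_upwards with t
    exact hp (x.1, t)
  -- symmetry of second derivative
  have hsymm : B (1, 0) (0, 1) = B (0, 1) (1, 0) :=
    ((hCA x hx).isSymmSndFDerivAt (by norm_num)).eq _ _
  -- values
  have hv1x : v1 x = D2 x := hv1D x hx
  have hv2x : v2 x = -D1 x := hv2D x hx
  refine ⟨?_, ?_, ?_⟩
  · rw [hv1H.deriv, hpH.deriv, hv1V, hv2x, hv1x]
    ring
  · rw [hpV.deriv, hv1x]
    ring
  · rw [hv1H.deriv, hv2V.deriv, hsymm]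
    ring
end

section
/- Let (v1, v2) be a C¹ divergence-free vector field on a domain Ω with v1 > 0 in Ω, tangent to the boundary of Ω = {(x1, x2) : s0(x1) < x2 < s1(x1)} with s0, s1 ∈ C². Then any streamline (integral curve of (v1, v2)) starting at a point of Ω stays in Ω for all time: it never reaches ∂Ω. In particular, if a streamline through (x1⁰, x2⁰) ∈ Ω touched the lower boundary at (x1¹, s0(x1¹)), Green's theorem would force ∫_{s0(x1⁰)}^{x2⁰} v1(x1⁰, x2) dx2 = 0, contradicting v1 > 0. -/
open Set

/-- The closure of the nozzle region is the region between the graphs, with equality allowed. -/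
private lemma clos_eq (s0 s1 : ℝ → ℝ) (hs0 : Continuous s0) (hs1 : Continuous s1)
    (hlt : ∀ x1, s0 x1 < s1 x1) :
    closure {x : ℝ × ℝ | s0 x.1 < x.2 ∧ x.2 < s1 x.1}
      = {x : ℝ × ℝ | s0 x.1 ≤ x.2 ∧ x.2 ≤ s1 x.1} := by
  apply subset_antisymm
  · refine closure_minimal (fun x hx => ⟨hx.1.le, hx.2.le⟩) ?_
    exact (isClosed_le (hs0.comp continuous_fst) continuous_snd).inter
      (isClosed_le continuous_snd (hs1.comp continuous_fst))
  · rintro ⟨x1, x2⟩ ⟨h1, h2⟩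
    have hφ : Continuous (fun y : ℝ => ((x1, y) : ℝ × ℝ)) :=
      continuous_const.prodMk continuous_id
    have hx2 : x2 ∈ closure (Ioo (s0 x1) (s1 x1)) := by
      rw [closure_Ioo (hlt x1).ne]; exact ⟨h1, h2⟩
    have hmem : (x1, x2) ∈ (fun y : ℝ => ((x1, y) : ℝ × ℝ)) '' closure (Ioo (s0 x1) (s1 x1)) :=
      ⟨x2, hx2, rfl⟩
    have h3 := image_closure_subset_closure_image hφ hmem
    refine closure_mono ?_ h3
    rintro _ ⟨y, hy, rfl⟩
    exact ⟨hy.1, hy.2⟩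

/-- Grönwall-type lemma: a nonnegative quantity with `f' ≥ -L f` that is positive at `a`
cannot vanish at `b > a`. -/
private lemma gron (f f' : ℝ → ℝ) (a b L : ℝ) (hab : a < b)
    (hd : ∀ t ∈ Icc a b, HasDerivAt f (f' t) t)
    (hb : ∀ t ∈ Icc a b, -(L * f t) ≤ f' t)
    (hfb : f b = 0) (hfa : 0 < f a) : False := by
  set h : ℝ → ℝ := fun t => Real.exp (L * t) * f t with hh
  have hd' : ∀ t ∈ Icc a b,
      HasDerivAt h (Real.exp (L * t) * L * f t + Real.exp (L * t) * f' t) t := by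
    intro t ht
    have h1 : HasDerivAt (fun t => Real.exp (L * t)) (Real.exp (L * t) * L) t := by
      simpa using ((hasDerivAt_id t).const_mul L).exp
    exact (h1.mul (hd t ht)).congr_deriv (by ring)
  have hmono : MonotoneOn h (Icc a b) := by
    apply monotoneOn_of_deriv_nonneg (convex_Icc a b)
    · exact fun t ht => (hd' t ht).continuousAt.continuousWithinAt
    · intro t ht
      rw [interior_Icc] at ht
      exact (hd' t (Ioo_subset_Icc_self ht)).differentiableAt.differentiableWithinAt
    · intro t ht
      rw [interior_Icc] at ht
      have ht' := Ioo_subset_Icc_self ht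
      rw [(hd' t ht').deriv]
      have hbb := hb t ht'
      nlinarith [Real.exp_pos (L * t)]
  have h1 : h a ≤ h b := hmono (left_mem_Icc.2 hab.le) (right_mem_Icc.2 hab.le) hab.le
  have h2 : 0 < h a := mul_pos (Real.exp_pos _) hfa
  have h3 : h b = 0 := by simp [hh, hfb]
  linarith

/-- Near a point of the lower boundary, the quantity `v2 - s0' v1` (which vanishes on the
boundary by tangency) is controlled linearly by the distance `x2 - s0 x1` to the boundary. -/
private lemma vert_bound (s0 s1 : ℝ → ℝ) (hs0 : ContDiff ℝ 1 s0) (hs1 : Continuous s1)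
    (hlt : ∀ x1, s0 x1 < s1 x1) (v : ℝ × ℝ → ℝ × ℝ)
    (hreg : ContDiffOn ℝ 1 v (closure {x : ℝ × ℝ | s0 x.1 < x.2 ∧ x.2 < s1 x.1}))
    (htang : ∀ a, (v (a, s0 a)).2 = deriv s0 a * (v (a, s0 a)).1) (a : ℝ) :
    ∃ δ > 0, ∃ L : ℝ, ∀ x : ℝ × ℝ,
      x ∈ closure {x : ℝ × ℝ | s0 x.1 < x.2 ∧ x.2 < s1 x.1} →
      dist x (a, s0 a) < δ →
      |(v x).2 - deriv s0 x.1 * (v x).1| ≤ L * (x.2 - s0 x.1) := by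
  set Ω : Set (ℝ × ℝ) := {x : ℝ × ℝ | s0 x.1 < x.2 ∧ x.2 < s1 x.1} with hΩ
  have hclset := clos_eq s0 s1 hs0.continuous hs1 hlt
  set c : ℝ := (s1 a - s0 a) / 2 with hc
  have hc0 : 0 < c := by have := hlt a; rw [hc]; linarith
  have hcont : Continuous (fun x1 => s1 x1 - s0 x1) := hs1.sub hs0.continuous
  obtain ⟨r, hr0, hrp⟩ : ∃ r > 0, ∀ x1, |x1 - a| < r → c < s1 x1 - s0 x1 := by
    obtain ⟨r, hr0, h⟩ := Metric.continuousAt_iff.1 hcont.continuousAt c hc0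
    refine ⟨r, hr0, fun x1 hx1 => ?_⟩
    have h2 := h (show dist x1 a < r by rwa [Real.dist_eq])
    rw [Real.dist_eq] at h2
    have h3 := (abs_lt.1 h2).1
    rw [hc] at *
    linarith
  set Φ : ℝ × ℝ → ℝ × ℝ := fun p => (p.1, p.2 + s0 p.1) with hΦdef
  have hΦ : ContDiff ℝ 1 Φ := contDiff_fst.prodMk (contDiff_snd.add (hs0.comp contDiff_fst))
  set R : Set (ℝ × ℝ) := Ioo (a - r) (a + r) ×ˢ Icc (0 : ℝ) c with hR
  have hmapsto : MapsTo Φ R (closure Ω) := by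
    rintro ⟨x1, y⟩ ⟨hx1, hy⟩
    rw [hclset]
    refine ⟨?_, ?_⟩
    · show s0 x1 ≤ y + s0 x1
      linarith [hy.1]
    · show y + s0 x1 ≤ s1 x1
      have habs : |x1 - a| < r := abs_lt.2 ⟨by linarith [hx1.1], by linarith [hx1.2]⟩
      have := hrp x1 habs
      linarith [hy.2]
  have hw : ContDiffOn ℝ 1 (v ∘ Φ) R := hreg.comp hΦ.contDiffOn hmapsto
  have hmemR : ((a, 0) : ℝ × ℝ) ∈ R :=
    ⟨⟨by linarith, by linarith⟩, ⟨le_refl 0, hc0.le⟩⟩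
  have hconv : Convex ℝ R := (convex_Ioo _ _).prod (convex_Icc _ _)
  obtain ⟨K, t, ht, hlip⟩ := (hw (a, 0) hmemR).exists_lipschitzOnWith hconv
  obtain ⟨ρ, hρ0, hρ⟩ := Metric.mem_nhdsWithin_iff.1 ht
  obtain ⟨B, hB⟩ := (isCompact_Icc (a := a - r) (b := a + r)).exists_bound_of_continuousOn
    (hs0.continuous_deriv le_rfl).continuousOn
  have hB0 : 0 ≤ B := le_trans (norm_nonneg _) (hB a ⟨by linarith, by linarith⟩)
  set m : ℝ := min ρ c with hm
  have hm0 : 0 < m := lt_min hρ0 hc0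
  obtain ⟨δ1, hδ10, hδ1⟩ : ∃ δ1 > 0, ∀ x1, |x1 - a| < δ1 → |s0 x1 - s0 a| < m / 4 := by
    obtain ⟨d, hd0, h⟩ := Metric.continuousAt_iff.1 hs0.continuous.continuousAt (m / 4)
      (by linarith)
    refine ⟨d, hd0, fun x1 hx1 => ?_⟩
    have := h (show dist x1 a < d by rwa [Real.dist_eq])
    rwa [Real.dist_eq] at this
  refine ⟨min (min δ1 r) (m / 4), by positivity, (1 + B) * (K : ℝ), ?_⟩
  rintro ⟨x1, x2⟩ hxC hxd
  rw [Prod.dist_eq] at hxd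
  obtain ⟨hdx1, hdx2⟩ := max_lt_iff.1 hxd
  rw [Real.dist_eq] at hdx1 hdx2
  have hx1δ1 : |x1 - a| < δ1 :=
    lt_of_lt_of_le hdx1 ((min_le_left _ _).trans (min_le_left _ _))
  have hx1r : |x1 - a| < r :=
    lt_of_lt_of_le hdx1 ((min_le_left _ _).trans (min_le_right _ _))
  have hx2m : |x2 - s0 a| < m / 4 := lt_of_lt_of_le hdx2 (min_le_right _ _)
  have hs0x1 : |s0 x1 - s0 a| < m / 4 := hδ1 x1 hx1δ1
  set y : ℝ := x2 - s0 x1 with hy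
  have hxle : s0 x1 ≤ x2 := by
    rw [hclset] at hxC
    exact hxC.1
  have hy0 : 0 ≤ y := by rw [hy]; linarith
  have hym : y < m / 2 := by
    have h1 : y = (x2 - s0 a) + (s0 a - s0 x1) := by rw [hy]; ring
    have h2 : |s0 a - s0 x1| < m / 4 := by rwa [abs_sub_comm]
    have h3 := (abs_lt.1 hx2m).2
    have h4 := (abs_lt.1 h2).2
    linarith
  have hmρ : m ≤ ρ := min_le_left _ _
  have hmc : m ≤ c := min_le_right _ _
  have hx1ioo : x1 ∈ Ioo (a - r) (a + r) := by
    have := abs_lt.1 hx1r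
    exact ⟨by linarith [this.1], by linarith [this.2]⟩
  have hmemy : ((x1, y) : ℝ × ℝ) ∈ R := ⟨hx1ioo, ⟨hy0, by linarith⟩⟩
  have hmem0 : ((x1, 0) : ℝ × ℝ) ∈ R := ⟨hx1ioo, ⟨le_refl 0, hc0.le⟩⟩
  have hx1ρ : |x1 - a| < ρ := by
    have : min (min δ1 r) (m / 4) ≤ m / 4 := min_le_right _ _
    linarith [lt_of_lt_of_le hdx1 this]
  have hballY : ((x1, y) : ℝ × ℝ) ∈ Metric.ball ((a, 0) : ℝ × ℝ) ρ := by
    rw [Metric.mem_ball, Prod.dist_eq]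
    apply max_lt
    · rwa [Real.dist_eq]
    · rw [Real.dist_eq, sub_zero, abs_of_nonneg hy0]
      linarith
  have hball0 : ((x1, 0) : ℝ × ℝ) ∈ Metric.ball ((a, 0) : ℝ × ℝ) ρ := by
    rw [Metric.mem_ball, Prod.dist_eq]
    apply max_lt
    · rwa [Real.dist_eq]
    · simpa using hρ0
  have hty := hρ ⟨hballY, hmemy⟩
  have ht0 := hρ ⟨hball0, hmem0⟩
  have hlipd := hlip.dist_le_mul _ hty _ ht0
  have hΦy : Φ (x1, y) = ((x1, x2) : ℝ × ℝ) := by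
    rw [hΦdef]
    have : y + s0 x1 = x2 := by rw [hy]; ring
    simp [this]
  have hΦ0 : Φ (x1, 0) = ((x1, s0 x1) : ℝ × ℝ) := by
    rw [hΦdef]; simp
  have hdistyy : dist ((x1, y) : ℝ × ℝ) ((x1, 0) : ℝ × ℝ) = y := by
    rw [Prod.dist_eq, dist_self, Real.dist_eq, sub_zero, abs_of_nonneg hy0]
    exact max_eq_right hy0
  have hPQ : dist (v (x1, x2)) (v (x1, s0 x1)) ≤ (K : ℝ) * y := by
    have : (v ∘ Φ) (x1, y) = v (x1, x2) := by rw [Function.comp_apply, hΦy]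
    have h0 : (v ∘ Φ) (x1, 0) = v (x1, s0 x1) := by rw [Function.comp_apply, hΦ0]
    rw [this, h0, hdistyy] at hlipd
    exact hlipd
  set P : ℝ × ℝ := v (x1, x2) with hP
  set Q : ℝ × ℝ := v (x1, s0 x1) with hQ
  have htq : Q.2 = deriv s0 x1 * Q.1 := htang x1
  have h1 : |P.2 - Q.2| ≤ dist P Q := by
    rw [Prod.dist_eq]
    exact le_trans (le_of_eq (Real.dist_eq P.2 Q.2).symm) (le_max_right _ _)
  have h2 : |P.1 - Q.1| ≤ dist P Q := by
    rw [Prod.dist_eq]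
    exact le_trans (le_of_eq (Real.dist_eq P.1 Q.1).symm) (le_max_left _ _)
  have hder : |deriv s0 x1| ≤ B := by
    have hmem : x1 ∈ Icc (a - r) (a + r) := ⟨hx1ioo.1.le, hx1ioo.2.le⟩
    have := hB x1 hmem
    rwa [Real.norm_eq_abs] at this
  have hKy : (0 : ℝ) ≤ (K : ℝ) := K.coe_nonneg
  show |P.2 - deriv s0 x1 * P.1| ≤ (1 + B) * (K : ℝ) * (x2 - s0 x1)
  have key : (P.2 - Q.2) - deriv s0 x1 * (P.1 - Q.1) = P.2 - deriv s0 x1 * P.1 := by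
    rw [htq]; ring
  calc |P.2 - deriv s0 x1 * P.1|
      = |(P.2 - Q.2) - deriv s0 x1 * (P.1 - Q.1)| := by rw [key]
    _ ≤ |P.2 - Q.2| + |deriv s0 x1 * (P.1 - Q.1)| := abs_sub _ _
    _ = |P.2 - Q.2| + |deriv s0 x1| * |P.1 - Q.1| := by rw [abs_mul]
    _ ≤ dist P Q + B * dist P Q :=
        add_le_add h1 (mul_le_mul hder h2 (abs_nonneg _) hB0)
    _ = (1 + B) * dist P Q := by ring
    _ ≤ (1 + B) * ((K : ℝ) * y) := by
        apply mul_le_mul_of_nonneg_left hPQ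
        linarith
    _ = (1 + B) * (K : ℝ) * (x2 - s0 x1) := by rw [hy]; ring

/-- A streamline cannot touch the lower boundary. -/
private lemma no_touch_lower (s0 s1 : ℝ → ℝ) (hs0 : ContDiff ℝ 1 s0) (hs1 : Continuous s1)
    (hlt : ∀ x1, s0 x1 < s1 x1) (v : ℝ × ℝ → ℝ × ℝ)
    (hreg : ContDiffOn ℝ 1 v (closure {x : ℝ × ℝ | s0 x.1 < x.2 ∧ x.2 < s1 x.1}))
    (htang : ∀ a, (v (a, s0 a)).2 = deriv s0 a * (v (a, s0 a)).1)
    (X : ℝ → ℝ × ℝ) (hX : ∀ t, HasDerivAt X (v (X t)) t)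
    (b T : ℝ) (hbT : b < T)
    (hin : ∀ t ∈ Ico b T, X t ∈ {x : ℝ × ℝ | s0 x.1 < x.2 ∧ x.2 < s1 x.1})
    (hcl : X T ∈ closure {x : ℝ × ℝ | s0 x.1 < x.2 ∧ x.2 < s1 x.1})
    (htouch : (X T).2 = s0 ((X T).1)) : False := by
  set Ω : Set (ℝ × ℝ) := {x : ℝ × ℝ | s0 x.1 < x.2 ∧ x.2 < s1 x.1} with hΩ
  set a : ℝ := (X T).1 with ha
  have hXTpair : X T = (a, s0 a) := by
    rw [ha]; exact Prod.ext rfl htouch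
  obtain ⟨δ, hδ, L, hL⟩ := vert_bound s0 s1 hs0 hs1 hlt v hreg htang a
  have hXc : Continuous X := by
    rw [continuous_iff_continuousAt]; exact fun t => (hX t).continuousAt
  obtain ⟨η, hη, hηd⟩ := Metric.continuousAt_iff.1 (hXc.continuousAt (x := T)) δ hδ
  set ε : ℝ := min (T - b) (η / 2) with hε
  have hε0 : 0 < ε := lt_min (by linarith) (by linarith)
  have hεb : b ≤ T - ε := by
    have : ε ≤ T - b := min_le_left _ _
    linarith
  set f : ℝ → ℝ := fun t => (X t).2 - s0 ((X t).1) with hf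
  set f' : ℝ → ℝ := fun t => (v (X t)).2 - deriv s0 ((X t).1) * (v (X t)).1 with hf'
  have hd : ∀ t : ℝ, HasDerivAt f (f' t) t := by
    intro t
    have hf1 : HasDerivAt (fun t => (X t).1) ((v (X t)).1) t :=
      (ContinuousLinearMap.fst ℝ ℝ ℝ).hasFDerivAt.comp_hasDerivAt t (hX t)
    have hf2 : HasDerivAt (fun t => (X t).2) ((v (X t)).2) t :=
      (ContinuousLinearMap.snd ℝ ℝ ℝ).hasFDerivAt.comp_hasDerivAt t (hX t)
    have hs0t : HasDerivAt (fun t => s0 ((X t).1)) (deriv s0 ((X t).1) * (v (X t)).1) t :=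
      (hs0.differentiable (by norm_num) ((X t).1)).hasDerivAt.comp t hf1
    exact hf2.sub hs0t
  have hmem : ∀ t ∈ Icc (T - ε) T, X t ∈ closure Ω := by
    intro t ht
    rcases lt_or_eq_of_le ht.2 with h | h
    · exact subset_closure (hin t ⟨hεb.trans ht.1, h⟩)
    · rw [h]; exact hcl
  have hdist : ∀ t ∈ Icc (T - ε) T, dist (X t) (a, s0 a) < δ := by
    intro t ht
    rw [← hXTpair]
    apply hηd
    have h1 : ε ≤ η / 2 := min_le_right _ _
    have : |t - T| ≤ ε := by
      rw [abs_le]; constructor <;> [linarith [ht.1]; linarith [ht.2]]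
    calc dist t T = |t - T| := Real.dist_eq t T
      _ ≤ ε := this
      _ < η := by linarith
  refine gron f f' (T - ε) T L (by linarith) (fun t _ => hd t) ?_ ?_ ?_
  · intro t ht
    have hb := hL (X t) (hmem t ht) (hdist t ht)
    have := (abs_le.1 hb).1
    rw [hf']
    simpa [hf] using this
  · rw [hf]
    simp [htouch, ha]
  · have hΩmem := hin (T - ε) ⟨hεb, by linarith⟩
    show (0:ℝ) < (X (T - ε)).2 - s0 ((X (T - ε)).1)
    have : s0 ((X (T - ε)).1) < (X (T - ε)).2 := hΩmem.1
    linarith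

/-- Forward-in-time invariance of the nozzle region. -/
private lemma forward (s0 s1 : ℝ → ℝ) (hs0 : ContDiff ℝ 1 s0) (hs1 : ContDiff ℝ 1 s1)
    (hlt : ∀ x1, s0 x1 < s1 x1) (v : ℝ × ℝ → ℝ × ℝ)
    (hreg : ContDiffOn ℝ 1 v (closure {x : ℝ × ℝ | s0 x.1 < x.2 ∧ x.2 < s1 x.1}))
    (htang0 : ∀ a, (v (a, s0 a)).2 = deriv s0 a * (v (a, s0 a)).1)
    (htang1 : ∀ a, (v (a, s1 a)).2 = deriv s1 a * (v (a, s1 a)).1)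
    (X : ℝ → ℝ × ℝ) (hX : ∀ t, HasDerivAt X (v (X t)) t)
    (hX0 : X 0 ∈ {x : ℝ × ℝ | s0 x.1 < x.2 ∧ x.2 < s1 x.1}) :
    ∀ t, 0 ≤ t → X t ∈ {x : ℝ × ℝ | s0 x.1 < x.2 ∧ x.2 < s1 x.1} := by
  set Ω : Set (ℝ × ℝ) := {x : ℝ × ℝ | s0 x.1 < x.2 ∧ x.2 < s1 x.1} with hΩ
  by_contra hcon
  push_neg at hcon
  obtain ⟨τ, hτ0, hτ⟩ := hcon
  have hXc : Continuous X := by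
    rw [continuous_iff_continuousAt]; exact fun t => (hX t).continuousAt
  have hΩopen : IsOpen Ω := by
    rw [hΩ]
    exact (isOpen_lt ((hs0.continuous).comp continuous_fst) continuous_snd).inter
      (isOpen_lt continuous_snd ((hs1.continuous).comp continuous_fst))
  set K : Set ℝ := {t ∈ Icc 0 τ | X t ∉ Ω} with hK
  have hKc : IsClosed K := (isClosed_Icc).inter (hΩopen.isClosed_compl.preimage hXc)
  have hKne : K.Nonempty := ⟨τ, ⟨le_refl 0 |>.trans hτ0, le_refl τ⟩, hτ⟩
  have hKbdd : BddBelow K := ⟨0, fun t ht => ht.1.1⟩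
  set T := sInf K with hT
  have hTK : T ∈ K := hKc.csInf_mem hKne hKbdd
  have hT0 : 0 < T := by
    rcases lt_or_eq_of_le hTK.1.1 with h | h
    · exact h
    · exact absurd (h ▸ hX0) hTK.2
  have hin : ∀ t ∈ Ico 0 T, X t ∈ Ω := by
    intro t ht
    by_contra hnot
    have : t ∈ K := ⟨⟨ht.1, ht.2.le.trans hTK.1.2⟩, hnot⟩
    exact absurd (csInf_le hKbdd this) (not_le.2 ht.2)
  have hcl : X T ∈ closure Ω := by
    have htend : Filter.Tendsto X (nhdsWithin T (Iio T)) (nhds (X T)) :=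
      (hXc.continuousAt).continuousWithinAt
    refine mem_closure_of_tendsto htend ?_
    filter_upwards [Ioo_mem_nhdsLT_of_mem (⟨hT0, le_refl T⟩ : T ∈ Ioc 0 T)] with t ht
    exact hin t ⟨ht.1.le, ht.2⟩
  have hclset := clos_eq s0 s1 hs0.continuous hs1.continuous hlt
  have hXT := hcl
  rw [hclset] at hXT
  have hbd : (X T).2 = s0 ((X T).1) ∨ (X T).2 = s1 ((X T).1) := by
    by_contra hno
    push_neg at hno
    exact hTK.2 ⟨lt_of_le_of_ne hXT.1 (Ne.symm hno.1), lt_of_le_of_ne hXT.2 hno.2⟩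
  rcases hbd with hb0 | hb1
  · exact no_touch_lower s0 s1 hs0 hs1.continuous hlt v hreg htang0 X hX 0 T hT0 hin hcl hb0
  · -- reflect vertically and use the lower-boundary lemma
    set N : ℝ × ℝ ≃ₜ ℝ × ℝ := (Homeomorph.refl ℝ).prodCongr (Homeomorph.neg ℝ) with hN
    have hNapp : ∀ p : ℝ × ℝ, N p = (p.1, -p.2) := fun p => rfl
    have hNcd : ContDiff ℝ 1 (fun p : ℝ × ℝ => ((p.1, -p.2) : ℝ × ℝ)) :=
      contDiff_fst.prodMk contDiff_snd.neg
    set Ω' : Set (ℝ × ℝ) := {x : ℝ × ℝ | (-s1 ·) x.1 < x.2 ∧ x.2 < (-s0 ·) x.1} with hΩ'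
    have hΩ'pre : Ω' = N ⁻¹' Ω := by
      ext ⟨x1, x2⟩
      simp only [hΩ', hΩ, mem_setOf_eq, mem_preimage, hNapp]
      constructor
      · rintro ⟨h1, h2⟩; exact ⟨by linarith, by linarith⟩
      · rintro ⟨h1, h2⟩; exact ⟨by linarith, by linarith⟩
    have hclos' : closure Ω' = N ⁻¹' (closure Ω) := by
      rw [hΩ'pre, N.preimage_closure]
    have hmaps : MapsTo (fun p : ℝ × ℝ => ((p.1, -p.2) : ℝ × ℝ)) (closure Ω') (closure Ω) := by
      intro p hp
      rw [hclos'] at hp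
      exact hp
    have hreg' : ContDiffOn ℝ 1
        (fun p : ℝ × ℝ => (((v (p.1, -p.2)).1, -(v (p.1, -p.2)).2) : ℝ × ℝ)) (closure Ω') := by
      have h1 : ContDiffOn ℝ 1 (fun p : ℝ × ℝ => v (p.1, -p.2)) (closure Ω') :=
        hreg.comp hNcd.contDiffOn hmaps
      exact (h1.fst).prodMk (h1.snd.neg)
    refine no_touch_lower (fun a => -s1 a) (fun a => -s0 a) hs1.neg (hs0.continuous.neg)
      (fun a => by simpa using (hlt a))
      (fun p => (((v (p.1, -p.2)).1, -(v (p.1, -p.2)).2) : ℝ × ℝ)) hreg' ?_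
      (fun t => (((X t).1, -(X t).2) : ℝ × ℝ)) ?_ 0 T hT0 ?_ ?_ ?_
    · intro a
      have hd : deriv (fun a => -s1 a) a = -deriv s1 a := by
        simp
      simp only [neg_neg, hd]
      have := htang1 a
      simp [this]
    · intro t
      have h1 : HasDerivAt (fun t => (((X t).1, -(X t).2) : ℝ × ℝ))
          (((v (X t)).1, -(v (X t)).2) : ℝ × ℝ) t := by
        have hf : HasDerivAt (fun t => (X t).1) ((v (X t)).1) t :=
          (ContinuousLinearMap.fst ℝ ℝ ℝ).hasFDerivAt.comp_hasDerivAt t (hX t)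
        have hs : HasDerivAt (fun t => (X t).2) ((v (X t)).2) t :=
          (ContinuousLinearMap.snd ℝ ℝ ℝ).hasFDerivAt.comp_hasDerivAt t (hX t)
        exact hf.prodMk hs.neg
      simpa using h1
    · intro t ht
      have := hin t ht
      rw [hΩ] at this
      exact ⟨by simpa using this.2, by simpa using this.1⟩
    · show N (X T) ∈ closure Ω'
      rw [hclos', mem_preimage, show N (N (X T)) = X T by simp [hNapp]]
      exact hcl
    · simpa using hb1

/-- Streamlines of a `C¹` divergence-free field with `v1 > 0`, tangent to the boundary
of the nozzle `Ω = {(x1,x2) : s0(x1) < x2 < s1(x1)}`, stay in `Ω` for all time. -/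
theorem stmt_16 (s0 s1 : ℝ → ℝ)
    (hs0 : ContDiff ℝ 2 s0) (hs1 : ContDiff ℝ 2 s1)
    (hlt : ∀ x1 : ℝ, s0 x1 < s1 x1)
    (Ω : Set (ℝ × ℝ))
    (hΩ : Ω = {x : ℝ × ℝ | s0 x.1 < x.2 ∧ x.2 < s1 x.1})
    (v1 v2 : ℝ × ℝ → ℝ)
    (hreg : ContDiffOn ℝ 1 (fun x => (v1 x, v2 x)) (closure Ω))
    (hdiv : ∀ x ∈ closure Ω,
      deriv (fun t => v1 (t, x.2)) x.1 + deriv (fun t => v2 (x.1, t)) x.2 = 0)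
    (hpos : ∀ x ∈ Ω, 0 < v1 x)
    (htang0 : ∀ x1 : ℝ, v2 (x1, s0 x1) = deriv s0 x1 * v1 (x1, s0 x1))
    (htang1 : ∀ x1 : ℝ, v2 (x1, s1 x1) = deriv s1 x1 * v1 (x1, s1 x1))
    (X : ℝ → ℝ × ℝ)
    (hX : ∀ t : ℝ, HasDerivAt X (v1 (X t), v2 (X t)) t)
    (hX0 : X 0 ∈ Ω) :
    ∀ t : ℝ, X t ∈ Ω := by
  subst hΩ
  set v : ℝ × ℝ → ℝ × ℝ := fun x => (v1 x, v2 x) with hv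
  have hs0' : ContDiff ℝ 1 s0 := hs0.of_le (by norm_num)
  have hs1' : ContDiff ℝ 1 s1 := hs1.of_le (by norm_num)
  have hXv : ∀ t, HasDerivAt X (v (X t)) t := hX
  intro t
  rcases le_or_gt 0 t with ht | ht
  · exact forward s0 s1 hs0' hs1' hlt v hreg htang0 htang1 X hXv hX0 t ht
  · -- time reversal
    have key := forward s0 s1 hs0' hs1' hlt (fun x => -v x) hreg.neg
      (by intro a; simp [hv, htang0 a])
      (by intro a; simp [hv, htang1 a])
      (fun s => X (-s))
      (by
        intro s
        have h1 := (hXv (-s)).scomp s (hasDerivAt_neg s)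
        simp at h1; exact h1)
      (by simpa using hX0)
    have := key (-t) (by linarith)
    simpa using this
end
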